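/- If a real sequence (x_n) converges to 0 and lim_{n→∞} n^s (x_n − x_{n+1}) = l for some real s > 1 and finite l, then lim_{n→∞} n^{s−1} x_n = l/(s−1). -/

import Mathlib

open Real Filter Topology

private lemma mvt_bound {s : ℝ} (hs : 1 < s) {a : ℝ} (ha : 1 ≤ a) :
    (s-1) * (a+1) ^ (-s) ≤ a ^ (1-s) - (a+1) ^ (1-s) ∧
    a ^ (1-s) - (a+1) ^ (1-s) ≤ (s-1) * a ^ (-s) := by
  have ha0 : 0 < a := by linarith
  have hderiv : ∀ t ∈ Set.Ioo a (a+1), HasDerivAt (fun t : ℝ => t ^ (1-s)) ((1-s) * t ^ (-s)) t := by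
    intro t ht
    have ht0 : t ≠ 0 := ne_of_gt (lt_trans ha0 ht.1)
    have h := Real.hasDerivAt_rpow_const (x := t) (p := 1-s) (Or.inl ht0)
    have : (1-s) - 1 = -s := by ring
    rwa [this] at h
  obtain ⟨c, hc, hceq⟩ := exists_hasDerivAt_eq_slope (fun t : ℝ => t ^ (1-s))
      (fun t : ℝ => (1-s) * t ^ (-s)) (by linarith : a < a + 1)
      (fun t ht => (Real.continuousAt_rpow_const t (1-s)
        (Or.inl (by intro h; rw [h] at ht; exact absurd ht.1 (by linarith)))).continuousWithinAt)
      hderiv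
  have hc0 : 0 < c := lt_trans ha0 hc.1
  have heq : a ^ (1-s) - (a+1) ^ (1-s) = (s-1) * c ^ (-s) := by
    have h1 : a + 1 - a = 1 := by ring
    rw [h1, div_one] at hceq
    nlinarith [hceq]
  have h2 : c ^ (-s) ≤ a ^ (-s) :=
    Real.rpow_le_rpow_of_nonpos ha0 hc.1.le (by linarith)
  have h3 : (a+1) ^ (-s) ≤ c ^ (-s) :=
    Real.rpow_le_rpow_of_nonpos hc0 hc.2.le (by linarith)
  constructor <;> nlinarith [heq, h2, h3]

private lemma tele_hasSum {s : ℝ} (hs : 1 < s) (n : ℕ) (hn : 1 ≤ n) :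
    HasSum (fun k : ℕ => ((n:ℝ)+k) ^ (1-s) - ((n:ℝ)+k+1) ^ (1-s)) ((n:ℝ) ^ (1-s)) := by
  set g : ℕ → ℝ := fun k => ((n:ℝ)+k) ^ (1-s) with hg
  have hpos : ∀ k : ℕ, (0:ℝ) < (n:ℝ)+k := by
    intro k
    have : (1:ℝ) ≤ (n:ℝ) := by exact_mod_cast hn
    positivity
  have hmono : ∀ k : ℕ, g (k+1) ≤ g k := by
    intro k
    apply Real.rpow_le_rpow_of_nonpos (hpos k) (by push_cast; linarith) (by linarith)
  have hterm : ∀ k : ℕ, ((n:ℝ)+k) ^ (1-s) - ((n:ℝ)+k+1) ^ (1-s) = g k - g (k+1) := by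
    intro k; simp only [hg]; push_cast; ring_nf
  have hsum : ∀ m : ℕ, ∑ i ∈ Finset.range m, (((n:ℝ)+i) ^ (1-s) - ((n:ℝ)+i+1) ^ (1-s))
      = (n:ℝ) ^ (1-s) - g m := by
    intro m
    rw [Finset.sum_congr rfl (fun i _ => hterm i), Finset.sum_range_sub' g m]
    simp [hg]
  have hnn : ∀ k : ℕ, (0:ℝ) ≤ ((n:ℝ)+k) ^ (1-s) - ((n:ℝ)+k+1) ^ (1-s) := by
    intro k; rw [hterm k]; linarith [hmono k]
  have hsummable : Summable (fun k : ℕ => ((n:ℝ)+k) ^ (1-s) - ((n:ℝ)+k+1) ^ (1-s)) := by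
    apply summable_of_sum_range_le (c := (n:ℝ)^(1-s)) hnn
    intro m; rw [hsum m]
    have : (0:ℝ) ≤ g m := (Real.rpow_pos_of_pos (hpos m) _).le
    linarith
  rw [hsummable.hasSum_iff_tendsto_nat]
  have hgz : Tendsto g atTop (𝓝 0) := by
    have h1 : Tendsto (fun m : ℕ => (n:ℝ)+(m:ℝ)) atTop atTop :=
      tendsto_atTop_add_const_left atTop ((n:ℕ):ℝ) (tendsto_natCast_atTop_atTop (R := ℝ))
    have h2' : Tendsto (fun t : ℝ => t ^ (-(s-1))) atTop (𝓝 (0:ℝ)) :=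
      tendsto_rpow_neg_atTop (by linarith)
    have h2 : Tendsto (fun t : ℝ => t ^ (1-s)) atTop (𝓝 (0:ℝ)) := by
      have : (1-s) = -(s-1) := by ring
      rw [this]; exact h2'
    exact (h2.comp h1).congr (fun m => by simp [hg])
  have := (tendsto_const_nhds (x := (n:ℝ) ^ (1-s)) (f := atTop (α := ℕ))).sub hgz
  simpa using this.congr (fun m => (hsum m).symm)

noncomputable def Ttail (s : ℝ) (n : ℕ) : ℝ := ∑' k : ℕ, ((n:ℝ)+(k:ℝ)) ^ (-s)

private lemma tail_summable {s : ℝ} (hs : 1 < s) (n : ℕ) :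
    Summable (fun k : ℕ => ((n:ℝ)+(k:ℝ)) ^ (-s)) := by
  have base : Summable (fun m : ℕ => (m:ℝ) ^ (-s)) :=
    Real.summable_nat_rpow.2 (by linarith)
  have shifted : Summable (fun k : ℕ => ((k+n:ℕ):ℝ) ^ (-s)) :=
    (summable_nat_add_iff n).2 base
  exact shifted.congr (fun k => by rw [show ((k+n:ℕ):ℝ) = (n:ℝ)+(k:ℝ) by push_cast; ring])

private lemma Ttail_succ (s : ℝ) (n : ℕ) :
    Ttail s (n+1) = ∑' k : ℕ, ((n:ℝ)+(k:ℝ)+1) ^ (-s) := by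
  unfold Ttail
  exact tsum_congr (fun k => by rw [show (((n+1:ℕ)):ℝ)+(k:ℝ) = (n:ℝ)+(k:ℝ)+1 by push_cast; ring])

private lemma Ttail_split {s : ℝ} (hs : 1 < s) (n : ℕ) :
    Ttail s n = (n:ℝ) ^ (-s) + Ttail s (n+1) := by
  unfold Ttail
  rw [Summable.tsum_eq_zero_add (tail_summable hs n)]
  congr 1
  · norm_num
  · exact tsum_congr (fun k => by rw [show ((n+1:ℕ):ℝ)+(k:ℝ) = (n:ℝ)+((k+1:ℕ):ℝ) by push_cast; ring])

private lemma one_le_cast {n : ℕ} (hn : 1 ≤ n) (k : ℕ) : (1:ℝ) ≤ (n:ℝ)+(k:ℝ) := by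
  have : (1:ℝ) ≤ (n:ℝ) := by exact_mod_cast hn
  have : (0:ℝ) ≤ (k:ℝ) := Nat.cast_nonneg k
  linarith

private lemma T_lower {s : ℝ} (hs : 1 < s) {n : ℕ} (hn : 1 ≤ n) :
    (n:ℝ) ^ (1-s) ≤ (s-1) * Ttail s n := by
  have h := (tele_hasSum hs n hn).tsum_eq
  rw [← h, show (s-1) * Ttail s n = ∑' k : ℕ, (s-1) * ((n:ℝ)+(k:ℝ)) ^ (-s) by
    unfold Ttail; exact tsum_mul_left.symm]
  exact Summable.tsum_le_tsum (fun k => (mvt_bound hs (one_le_cast hn k)).2)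
    (tele_hasSum hs n hn).summable ((tail_summable hs n).mul_left _)

private lemma T_upper {s : ℝ} (hs : 1 < s) {n : ℕ} (hn : 1 ≤ n) :
    (s-1) * Ttail s (n+1) ≤ (n:ℝ) ^ (1-s) := by
  have h := (tele_hasSum hs n hn).tsum_eq
  rw [← h, Ttail_succ, show (s-1) * ∑' k : ℕ, ((n:ℝ)+(k:ℝ)+1) ^ (-s)
      = ∑' k : ℕ, (s-1) * ((n:ℝ)+(k:ℝ)+1) ^ (-s) by rw [tsum_mul_left]]
  have hsum1 : Summable (fun k : ℕ => ((n:ℝ)+(k:ℝ)+1) ^ (-s)) := by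
    have := tail_summable hs (n+1)
    exact this.congr (fun k => by rw [show ((n+1:ℕ):ℝ)+(k:ℝ) = (n:ℝ)+(k:ℝ)+1 by push_cast; ring])
  exact Summable.tsum_le_tsum (fun k => (mvt_bound hs (one_le_cast hn k)).1)
    (hsum1.mul_left _) (tele_hasSum hs n hn).summable

private lemma T_tendsto {s : ℝ} (hs : 1 < s) :
    Tendsto (fun n : ℕ => (n:ℝ) ^ (s-1) * Ttail s n) atTop (𝓝 (1/(s-1))) := by
  have hs1 : (0:ℝ) < s - 1 := by linarith
  apply tendsto_of_tendsto_of_tendsto_of_le_of_le' (g := fun _ : ℕ => 1/(s-1))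
      (h := fun n : ℕ => 1/(s-1) + 1/(n:ℝ))
  · exact tendsto_const_nhds
  · have := tendsto_one_div_atTop_nhds_zero_nat (𝕜 := ℝ)
    simpa using (tendsto_const_nhds (x := 1/(s-1)) (f := atTop (α := ℕ))).add this
  · filter_upwards [eventually_ge_atTop 1] with n hn
    have hn0 : (0:ℝ) < (n:ℝ) := by exact_mod_cast Nat.lt_of_lt_of_le Nat.zero_lt_one hn
    have key : (n:ℝ) ^ (s-1) * (n:ℝ) ^ (1-s) = 1 := by
      rw [← Real.rpow_add hn0]; norm_num
    have h1 := T_lower hs hn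
    have h2 : (n:ℝ) ^ (s-1) * (n:ℝ) ^ (1-s) ≤ (n:ℝ) ^ (s-1) * ((s-1) * Ttail s n) :=
      mul_le_mul_of_nonneg_left h1 (Real.rpow_nonneg hn0.le _)
    rw [key] at h2
    rw [div_le_iff₀ hs1]
    nlinarith [h2]
  · filter_upwards [eventually_ge_atTop 1] with n hn
    have hn0 : (0:ℝ) < (n:ℝ) := by exact_mod_cast Nat.lt_of_lt_of_le Nat.zero_lt_one hn
    have key : (n:ℝ) ^ (s-1) * (n:ℝ) ^ (1-s) = 1 := by
      rw [← Real.rpow_add hn0]; norm_num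
    have key2 : (n:ℝ) ^ (s-1) * (n:ℝ) ^ (-s) = 1/(n:ℝ) := by
      rw [← Real.rpow_add hn0, show s-1+(-s) = -1 by ring, Real.rpow_neg_one]
      exact inv_eq_one_div _
    have h1 := T_upper hs hn
    have hsplit := Ttail_split hs n
    -- (s-1) * Ttail s n = (s-1)*n^{-s} + (s-1)*Ttail s (n+1) ≤ (s-1)*n^{-s} + n^{1-s}
    have h3 : (s-1) * Ttail s n ≤ (s-1) * (n:ℝ) ^ (-s) + (n:ℝ) ^ (1-s) := by
      rw [hsplit]; nlinarith [h1]
    have h4 : (n:ℝ) ^ (s-1) * ((s-1) * Ttail s n)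
        ≤ (n:ℝ) ^ (s-1) * ((s-1) * (n:ℝ) ^ (-s) + (n:ℝ) ^ (1-s)) :=
      mul_le_mul_of_nonneg_left h3 (Real.rpow_nonneg hn0.le _)
    have h5 : (n:ℝ) ^ (s-1) * ((s-1) * (n:ℝ) ^ (-s) + (n:ℝ) ^ (1-s))
        = (s-1) * (1/(n:ℝ)) + 1 := by
      rw [mul_add]
      rw [show (n:ℝ) ^ (s-1) * ((s-1) * (n:ℝ) ^ (-s)) = (s-1) * ((n:ℝ)^(s-1) * (n:ℝ)^(-s)) by ring,
        key2, key]
    rw [h5] at h4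
    have e1 : (s-1) * (1/(s-1)) = 1 := mul_one_div_cancel hs1.ne'
    nlinarith [h4, e1, hs1]

theorem mortici_lemma (x : ℕ → ℝ) (s l : ℝ) (hs : 1 < s)
    (hx : Tendsto x atTop (nhds 0))
    (hl : Tendsto (fun n : ℕ => (n : ℝ) ^ s * (x n - x (n + 1))) atTop (nhds l)) :
    Tendsto (fun n : ℕ => (n : ℝ) ^ (s - 1) * x n) atTop (nhds (l / (s - 1))) := by
  have hs1 : (0:ℝ) < s - 1 := by linarith
  set d : ℕ → ℝ := fun k => x k - x (k+1) with hd
  set e : ℕ → ℝ := fun k => d k - l * (k:ℝ) ^ (-s) with he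
  -- k^s * e k → 0
  have he0 : Tendsto (fun k : ℕ => (k:ℝ) ^ s * e k) atTop (𝓝 0) := by
    have h1 : Tendsto (fun k : ℕ => (k:ℝ) ^ s * d k - l) atTop (𝓝 0) := by
      simpa using hl.sub (tendsto_const_nhds (x := l))
    apply h1.congr'
    filter_upwards [eventually_ge_atTop 1] with k hk
    have hk0 : (0:ℝ) < (k:ℝ) := by exact_mod_cast hk
    have hone : (k:ℝ) ^ s * (k:ℝ) ^ (-s) = 1 := by
      rw [← Real.rpow_add hk0]; norm_num
    show (k:ℝ) ^ s * d k - l = (k:ℝ) ^ s * e k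
    simp only [he, hd]
    linear_combination l * hone
  -- summability of e
  have heS : Summable e := by
    apply Summable.of_norm_bounded_eventually (g := fun k : ℕ => (k:ℝ) ^ (-s))
      (Real.summable_nat_rpow.2 (by linarith))
    rw [Nat.cofinite_eq_atTop]
    have hev := he0.eventually (Metric.ball_mem_nhds (0:ℝ) one_pos)
    filter_upwards [hev, eventually_ge_atTop 1] with k hk1 hk2
    have hk0 : (0:ℝ) < (k:ℝ) := by exact_mod_cast hk2
    have hkpow : (0:ℝ) < (k:ℝ) ^ (-s) := Real.rpow_pos_of_pos hk0 _
    have hinv : (k:ℝ) ^ s * (k:ℝ) ^ (-s) = 1 := by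
      rw [← Real.rpow_add hk0]; norm_num
    have hb : |(k:ℝ) ^ s * e k| < 1 := by
      rw [Real.dist_eq, sub_zero] at hk1; exact hk1
    have hepos : (0:ℝ) < (k:ℝ) ^ s := Real.rpow_pos_of_pos hk0 _
    rw [Real.norm_eq_abs]
    rw [abs_mul, abs_of_pos hepos] at hb
    have hle := mul_le_mul_of_nonneg_right hb.le hkpow.le
    rw [mul_comm ((k:ℝ)^s) _, mul_assoc, hinv, mul_one] at hle
    linarith [hle, hkpow]
  have hlS : Summable (fun k : ℕ => l * (k:ℝ) ^ (-s)) :=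
    (Real.summable_nat_rpow.2 (by linarith)).mul_left l
  have hdS : Summable d :=
    (heS.add hlS).congr (fun k => by simp only [he]; ring)
  -- x n = tail sum of d
  have hxs : ∀ n : ℕ, HasSum (fun k => d (n+k)) (x n) := by
    intro n
    have hS : Summable (fun k => d (n+k)) :=
      ((summable_nat_add_iff n).2 hdS).congr (fun k => by rw [Nat.add_comm])
    rw [hS.hasSum_iff_tendsto_nat]
    have hps : ∀ m : ℕ, ∑ i ∈ Finset.range m, d (n+i) = x n - x (n+m) := by
      intro m
      have := Finset.sum_range_sub' (fun i => x (n+i)) m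
      simpa [hd, add_assoc] using this
    have hxm : Tendsto (fun m : ℕ => x n - x (n+m)) atTop (𝓝 (x n)) := by
      have : Tendsto (fun m : ℕ => x (n+m)) atTop (𝓝 0) :=
        hx.comp (tendsto_add_atTop_nat n |>.congr (fun m => by omega) : Tendsto (fun m => n+m) atTop atTop)
      simpa using (tendsto_const_nhds (x := x n) (f := atTop (α := ℕ))).sub this
    exact hxm.congr (fun m => (hps m).symm)
  -- summabilities of shifted sequences
  have heSn : ∀ n : ℕ, Summable (fun k => e (n+k)) := fun n =>
    ((summable_nat_add_iff n).2 heS).congr (fun k => by rw [Nat.add_comm])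
  have htSn : ∀ n : ℕ, Summable (fun k : ℕ => l * ((n:ℝ)+(k:ℝ)) ^ (-s)) := fun n =>
    (tail_summable hs n).mul_left l
  -- x n = E n + l * Ttail s n
  set E : ℕ → ℝ := fun n => ∑' k : ℕ, e (n+k) with hE
  have hxE : ∀ n : ℕ, x n = E n + l * Ttail s n := by
    intro n
    have h1 := (hxs n).tsum_eq
    rw [← h1]
    have h2 : ∀ k : ℕ, d (n+k) = e (n+k) + l * ((n:ℝ)+(k:ℝ)) ^ (-s) := by
      intro k
      simp only [he]
      rw [show ((n+k:ℕ):ℝ) = (n:ℝ)+(k:ℝ) by push_cast; ring]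
      ring
    rw [tsum_congr h2, Summable.tsum_add (heSn n) (htSn n), hE]
    simp only []
    congr 1
    unfold Ttail
    exact tsum_mul_left
  -- n^{s-1} E n → 0
  have hEz : Tendsto (fun n : ℕ => (n:ℝ) ^ (s-1) * E n) atTop (𝓝 0) := by
    rw [Metric.tendsto_atTop]
    intro ε hε
    set B : ℝ := 1/(s-1) + 1 with hB
    have hB0 : 0 < B := by positivity
    set δ : ℝ := ε / (2*B) with hδ
    have hδ0 : 0 < δ := by positivity
    -- eventually |m^s e m| ≤ δ
    have hev := he0.eventually (Metric.closedBall_mem_nhds (0:ℝ) hδ0)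
    rw [eventually_atTop] at hev
    obtain ⟨N₁, hN₁⟩ := hev
    -- bound on n^{s-1} Ttail
    have hT := T_tendsto hs
    have hTev := hT.eventually (Metric.closedBall_mem_nhds _ (show (0:ℝ) < 1 by norm_num))
    rw [eventually_atTop] at hTev
    obtain ⟨N₂, hN₂⟩ := hTev
    refine ⟨max (max N₁ N₂) 1, fun n hn => ?_⟩
    have hn1 : 1 ≤ n := le_trans (le_max_right _ _) hn
    have hnN₁ : N₁ ≤ n := le_trans (le_trans (le_max_left _ _) (le_max_left _ _)) hn
    have hnN₂ : N₂ ≤ n := le_trans (le_trans (le_max_right _ _) (le_max_left _ _)) hn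
    have hn0 : (0:ℝ) < (n:ℝ) := by exact_mod_cast hn1
    -- pointwise bound |e (n+k)| ≤ δ * ((n:ℝ)+k)^(-s)
    have hpt : ∀ k : ℕ, |e (n+k)| ≤ δ * ((n:ℝ)+(k:ℝ)) ^ (-s) := by
      intro k
      have hm1 : 1 ≤ n + k := le_trans hn1 (Nat.le_add_right n k)
      have hm0 : (0:ℝ) < ((n+k:ℕ):ℝ) := by exact_mod_cast hm1
      have hb := hN₁ (n+k) (le_trans hnN₁ (Nat.le_add_right n k))
      have hb' : |((n+k:ℕ):ℝ) ^ s * e (n+k)| ≤ δ := by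
        rw [Real.dist_eq, sub_zero] at hb; exact hb
      have hinv : ((n+k:ℕ):ℝ) ^ s * ((n+k:ℕ):ℝ) ^ (-s) = 1 := by
        rw [← Real.rpow_add hm0]; norm_num
      have hepos : (0:ℝ) < ((n+k:ℕ):ℝ) ^ s := Real.rpow_pos_of_pos hm0 _
      have hkpow : (0:ℝ) < ((n+k:ℕ):ℝ) ^ (-s) := Real.rpow_pos_of_pos hm0 _
      rw [abs_mul, abs_of_pos hepos] at hb'
      have hle := mul_le_mul_of_nonneg_right hb' hkpow.le
      rw [mul_comm (((n+k:ℕ):ℝ)^s) _, mul_assoc, hinv, mul_one] at hle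
      rw [show ((n:ℝ)+(k:ℝ)) = ((n+k:ℕ):ℝ) by push_cast; ring]
      exact hle
    -- |E n| ≤ δ * Ttail s n
    have hEb : |E n| ≤ δ * Ttail s n := by
      rw [hE]
      have hnorm : Summable (fun k : ℕ => ‖e (n+k)‖) := by
        simpa [Real.norm_eq_abs] using (heSn n).abs
      have h1 : ‖∑' k : ℕ, e (n+k)‖ ≤ ∑' k : ℕ, ‖e (n+k)‖ := norm_tsum_le_tsum_norm hnorm
      calc |∑' k : ℕ, e (n+k)| ≤ ∑' k : ℕ, |e (n+k)| := by
            simpa [Real.norm_eq_abs] using h1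
        _ ≤ ∑' k : ℕ, δ * ((n:ℝ)+(k:ℝ)) ^ (-s) :=
            Summable.tsum_le_tsum hpt ((heSn n).abs) ((tail_summable hs n).mul_left δ)
        _ = δ * Ttail s n := by unfold Ttail; exact tsum_mul_left
    have hub : (n:ℝ) ^ (s-1) * Ttail s n ≤ 1/(s-1) + 1 := by
      have := hN₂ n hnN₂
      rw [Real.dist_eq] at this
      have := abs_le.1 this
      linarith [this.2]
    have hTnn : 0 ≤ Ttail s n := by
      unfold Ttail
      exact tsum_nonneg (fun k => Real.rpow_nonneg (by positivity) _)
    have hpow_nn : (0:ℝ) ≤ (n:ℝ) ^ (s-1) := Real.rpow_nonneg hn0.le _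
    have hfinal : |(n:ℝ) ^ (s-1) * E n| ≤ δ * B := by
      rw [abs_mul, abs_of_nonneg hpow_nn]
      calc (n:ℝ) ^ (s-1) * |E n| ≤ (n:ℝ) ^ (s-1) * (δ * Ttail s n) :=
            mul_le_mul_of_nonneg_left hEb hpow_nn
        _ = δ * ((n:ℝ) ^ (s-1) * Ttail s n) := by ring
        _ ≤ δ * B := by rw [hB]; exact mul_le_mul_of_nonneg_left hub hδ0.le
    have : δ * B = ε / 2 := by
      rw [hδ]; field_simp
    rw [Real.dist_eq, sub_zero]
    calc |(n:ℝ) ^ (s-1) * E n| ≤ δ * B := hfinal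
      _ = ε/2 := this
      _ < ε := by linarith
  -- assemble
  have hfin : Tendsto (fun n : ℕ => (n:ℝ) ^ (s-1) * E n + l * ((n:ℝ) ^ (s-1) * Ttail s n))
      atTop (𝓝 (0 + l * (1/(s-1)))) :=
    hEz.add ((T_tendsto hs).const_mul l)
  have : (0:ℝ) + l * (1/(s-1)) = l / (s-1) := by field_simp; ring
  rw [this] at hfin
  exact hfin.congr (fun n => by rw [hxE n]; ring)
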